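/- Let C be a bivariate copula admitting a tail dependence function Λ. Define the maximal tail dependence coefficient χ̄ = sup_{b ∈ (0,∞)} Λ(b, 1/b); the maximal intermediate tail dependence coefficient χ̄* = χ̄ / m̄, where m̄ = sup{ min(a, 1/a) : a ∈ argmax_{b ∈ (0,∞)} Λ(b,1/b) } (the supremum defining χ̄ is attained and m̄ > 0, so χ̄* is well defined); the maximal normalized tail dependence coefficient κ̄ = sup_{b ∈ (0,∞)} Λ(b,1/b)/min(b,1/b); and the maximal tail dependence measure λ̄ = sup_μ λ_μ(C), the supremum over all tail generating measures μ. Then Λ(1,1) ≤ χ̄ ≤ χ̄* ≤ κ̄ = λ̄. -/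

import Mathlib

open MeasureTheory Filter Set

/-- A bivariate copula: `C : [0,1]² → [0,1]` with the grounded/marginal conditions and
the 2-increasing property. -/
def IsCopula (C : ℝ → ℝ → ℝ) : Prop :=
  (∀ u ∈ Icc (0:ℝ) 1, ∀ v ∈ Icc (0:ℝ) 1, C u v ∈ Icc (0:ℝ) 1) ∧
  (∀ u ∈ Icc (0:ℝ) 1, C u 0 = 0 ∧ C 0 u = 0 ∧ C u 1 = u ∧ C 1 u = u) ∧
  (∀ u u' v v' : ℝ, u ∈ Icc (0:ℝ) 1 → u' ∈ Icc (0:ℝ) 1 →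
    v ∈ Icc (0:ℝ) 1 → v' ∈ Icc (0:ℝ) 1 → u ≤ u' → v ≤ v' →
    0 ≤ C u' v' - C u' v - C u v' + C u v)

/-- `Λ` is the tail dependence function of `C`:
`Λ(u,v) = lim_{p↓0} C(pu,pv)/p` for every `(u,v) ∈ [0,∞)²`. -/
def HasTDF (C Λ : ℝ → ℝ → ℝ) : Prop :=
  ∀ u v : ℝ, 0 ≤ u → 0 ≤ v →
    Tendsto (fun p : ℝ => C (p * u) (p * v) / p)
      (nhdsWithin (0:ℝ) (Ioi 0)) (nhds (Λ u v))

/-- A tail generating measure: a Borel probability measure on `[0,1]²` whose mass is not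
concentrated on `{u = 0} ∪ {v = 0}`. -/
def IsTailGenMeasure (μ : Measure (ℝ × ℝ)) : Prop :=
  IsProbabilityMeasure μ ∧
  μ ((Icc (0:ℝ) 1 ×ˢ Icc (0:ℝ) 1)ᶜ) = 0 ∧
  μ {q : ℝ × ℝ | q.1 = 0 ∨ q.2 = 0} < 1

/-- The μ-tail dependence measure: `λ_μ = (∫ Λ dμ) / (∫ min dμ)`, applied to
the tail dependence function `Λ` of the copula. -/
noncomputable def tdm (Λ : ℝ → ℝ → ℝ) (μ : Measure (ℝ × ℝ)) : ℝ :=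
  (∫ q, Λ q.1 q.2 ∂μ) / (∫ q : ℝ × ℝ, min q.1 q.2 ∂μ)

variable {C : ℝ → ℝ → ℝ}

lemma Cmono_left (hC : IsCopula C) {u u' v : ℝ} (hu : u ∈ Icc (0:ℝ) 1)
    (hu' : u' ∈ Icc (0:ℝ) 1) (hv : v ∈ Icc (0:ℝ) 1) (h : u ≤ u') : C u v ≤ C u' v := by
  have h2 := hC.2.2 u u' 0 v hu hu' (by norm_num) hv h hv.1
  have e1 := (hC.2.1 u' hu').1
  have e2 := (hC.2.1 u hu).1
  linarith

lemma Cmono_right (hC : IsCopula C) {u v v' : ℝ} (hu : u ∈ Icc (0:ℝ) 1)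
    (hv : v ∈ Icc (0:ℝ) 1) (hv' : v' ∈ Icc (0:ℝ) 1) (h : v ≤ v') : C u v ≤ C u v' := by
  have h2 := hC.2.2 0 u v v' (by norm_num) hu hv hv' hu.1 h
  have e1 := (hC.2.1 v' hv').2.1
  have e2 := (hC.2.1 v hv).2.1
  linarith

lemma Cle_fst (hC : IsCopula C) {u v : ℝ} (hu : u ∈ Icc (0:ℝ) 1) (hv : v ∈ Icc (0:ℝ) 1) :
    C u v ≤ u := by
  have := Cmono_right hC hu hv (by norm_num) hv.2
  have e := (hC.2.1 u hu).2.2.1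
  linarith

lemma Cle_snd (hC : IsCopula C) {u v : ℝ} (hu : u ∈ Icc (0:ℝ) 1) (hv : v ∈ Icc (0:ℝ) 1) :
    C u v ≤ v := by
  have := Cmono_left hC hu (by norm_num) hv hu.2
  have e := (hC.2.1 v hv).2.2.2
  linarith

lemma Clip_left (hC : IsCopula C) {u u' v : ℝ} (hu : u ∈ Icc (0:ℝ) 1)
    (hu' : u' ∈ Icc (0:ℝ) 1) (hv : v ∈ Icc (0:ℝ) 1) (h : u ≤ u') :
    C u' v - C u v ≤ u' - u := by
  have h2 := hC.2.2 u u' v 1 hu hu' hv (by norm_num) h hv.2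
  have e1 := (hC.2.1 u' hu').2.2.1
  have e2 := (hC.2.1 u hu).2.2.1
  linarith

lemma Clip_right (hC : IsCopula C) {u v v' : ℝ} (hu : u ∈ Icc (0:ℝ) 1)
    (hv : v ∈ Icc (0:ℝ) 1) (hv' : v' ∈ Icc (0:ℝ) 1) (h : v ≤ v') :
    C u v' - C u v ≤ v' - v := by
  have h2 := hC.2.2 u 1 v v' hu (by norm_num) hv hv' hu.2 h
  have e1 := (hC.2.1 v' hv').2.2.2
  have e2 := (hC.2.1 v hv).2.2.2
  linarith

lemma Clip (hC : IsCopula C) {u u' v v' : ℝ} (hu : u ∈ Icc (0:ℝ) 1)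
    (hu' : u' ∈ Icc (0:ℝ) 1) (hv : v ∈ Icc (0:ℝ) 1) (hv' : v' ∈ Icc (0:ℝ) 1) :
    |C u v - C u' v'| ≤ |u - u'| + |v - v'| := by
  have h1 : |C u v - C u' v| ≤ |u - u'| := by
    rcases le_total u u' with h | h
    · have := Clip_left hC hu hu' hv h
      have := Cmono_left hC hu hu' hv h
      rw [abs_of_nonpos (by linarith), abs_of_nonpos (by linarith)]; linarith
    · have := Clip_left hC hu' hu hv h
      have := Cmono_left hC hu' hu hv h
      rw [abs_of_nonneg (by linarith), abs_of_nonneg (by linarith)]; linarith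
  have h2 : |C u' v - C u' v'| ≤ |v - v'| := by
    rcases le_total v v' with h | h
    · have := Clip_right hC hu' hv hv' h
      have := Cmono_right hC hu' hv hv' h
      rw [abs_of_nonpos (by linarith), abs_of_nonpos (by linarith)]; linarith
    · have := Clip_right hC hu' hv' hv h
      have := Cmono_right hC hu' hv' hv h
      rw [abs_of_nonneg (by linarith), abs_of_nonneg (by linarith)]; linarith
  calc |C u v - C u' v'| ≤ |C u v - C u' v| + |C u' v - C u' v'| := abs_sub_le _ _ _
    _ ≤ |u - u'| + |v - v'| := add_le_add h1 h2

section
variable {C L : ℝ → ℝ → ℝ}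

lemma ev_small {u v : ℝ} (hu : 0 ≤ u) (hv : 0 ≤ v) :
    ∀ᶠ p in nhdsWithin (0:ℝ) (Ioi 0),
      0 < p ∧ p * u ∈ Icc (0:ℝ) 1 ∧ p * v ∈ Icc (0:ℝ) 1 := by
  have hM : (0:ℝ) < 1/(max u v + 1) := by positivity
  filter_upwards [Ioo_mem_nhdsGT_of_mem
    (show (0:ℝ) ∈ Ico 0 (1/(max u v + 1)) from ⟨le_refl _, hM⟩)] with p hp
  obtain ⟨hp0, hp1⟩ := hp
  have hMu : u ≤ max u v := le_max_left u v
  have hMv : v ≤ max u v := le_max_right u v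
  have hmax : 0 ≤ max u v := le_trans hu hMu
  have key : p * (max u v + 1) < 1 := by
    rw [lt_div_iff₀ (by positivity)] at hp1
    linarith
  refine ⟨hp0, ⟨by positivity, ?_⟩, ⟨by positivity, ?_⟩⟩
  · nlinarith
  · nlinarith

lemma L_nonneg (hC : IsCopula C) (hL : HasTDF C L) {u v : ℝ} (hu : 0 ≤ u) (hv : 0 ≤ v) :
    0 ≤ L u v := by
  refine ge_of_tendsto (hL u v hu hv) ?_
  filter_upwards [ev_small hu hv] with p hp
  obtain ⟨hp0, h1, h2⟩ := hp
  exact div_nonneg (hC.1 _ h1 _ h2).1 hp0.le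

lemma L_le_min (hC : IsCopula C) (hL : HasTDF C L) {u v : ℝ} (hu : 0 ≤ u) (hv : 0 ≤ v) :
    L u v ≤ min u v := by
  refine le_of_tendsto (hL u v hu hv) ?_
  filter_upwards [ev_small hu hv] with p hp
  obtain ⟨hp0, h1, h2⟩ := hp
  have c1 := Cle_fst hC h1 h2
  have c2 := Cle_snd hC h1 h2
  refine le_min ?_ ?_
  · rw [div_le_iff₀ hp0]; linarith
  · rw [div_le_iff₀ hp0]; linarith

lemma L_homog (hL : HasTDF C L) {u v t : ℝ} (hu : 0 ≤ u) (hv : 0 ≤ v) (ht : 0 < t) :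
    L (t * u) (t * v) = t * L u v := by
  have h1 : Tendsto (fun p : ℝ => C (p * (t * u)) (p * (t * v)) / p)
      (nhdsWithin (0:ℝ) (Ioi 0)) (nhds (L (t * u) (t * v))) :=
    hL _ _ (by positivity) (by positivity)
  have hmap : Tendsto (fun p : ℝ => p * t) (nhdsWithin (0:ℝ) (Ioi 0))
      (nhdsWithin (0:ℝ) (Ioi 0)) := by
    apply tendsto_nhdsWithin_of_tendsto_nhds_of_eventually_within
    · have := (continuous_mul_right t).tendsto (0:ℝ)
      simpa using this.mono_left nhdsWithin_le_nhds
    · filter_upwards [self_mem_nhdsWithin] with p hp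
      exact mul_pos hp ht
  have h2 : Tendsto (fun p : ℝ => C ((p * t) * u) ((p * t) * v) / (p * t) * t)
      (nhdsWithin (0:ℝ) (Ioi 0)) (nhds (L u v * t)) :=
    ((hL u v hu hv).comp hmap).mul_const t
  have heq : (fun p : ℝ => C ((p * t) * u) ((p * t) * v) / (p * t) * t)
      =ᶠ[nhdsWithin (0:ℝ) (Ioi 0)] (fun p : ℝ => C (p * (t * u)) (p * (t * v)) / p) := by
    filter_upwards [self_mem_nhdsWithin] with p hp
    have hp0 : (p:ℝ) ≠ 0 := ne_of_gt hp
    have ht0 : t ≠ 0 := ne_of_gt ht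
    rw [mul_assoc, mul_assoc]
    field_simp
  have := tendsto_nhds_unique h1 (h2.congr' heq)
  rw [this, mul_comm]

lemma L_lip (hC : IsCopula C) (hL : HasTDF C L) {u v u' v' : ℝ}
    (hu : 0 ≤ u) (hv : 0 ≤ v) (hu' : 0 ≤ u') (hv' : 0 ≤ v') :
    |L u v - L u' v'| ≤ |u - u'| + |v - v'| := by
  have h := ((hL u v hu hv).sub (hL u' v' hu' hv')).abs
  refine le_of_tendsto h ?_
  filter_upwards [ev_small hu hv, ev_small hu' hv'] with p hp hp'
  obtain ⟨hp0, h1, h2⟩ := hp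
  obtain ⟨_, h3, h4⟩ := hp'
  rw [div_sub_div_same, abs_div, abs_of_pos hp0, div_le_iff₀ hp0]
  have := Clip hC h1 h3 h2 h4
  have e1 : |p * u - p * u'| = p * |u - u'| := by
    rw [← mul_sub, abs_mul, abs_of_pos hp0]
  have e2 : |p * v - p * v'| = p * |v - v'| := by
    rw [← mul_sub, abs_mul, abs_of_pos hp0]
  rw [e1, e2] at this
  linarith
end
section
lemma min1_lip (x y : ℝ) : |min x 1 - min y 1| ≤ |x - y| := by
  rcases le_total x 1 with hx | hx <;> rcases le_total y 1 with hy | hy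
  · rw [min_eq_left hx, min_eq_left hy]
  · rw [min_eq_left hx, min_eq_right hy]
    rcases abs_cases (x - y) with ⟨h, _⟩ | ⟨h, _⟩ <;>
      rw [abs_of_nonpos (by linarith)] <;> linarith
  · rw [min_eq_right hx, min_eq_left hy]
    rcases abs_cases (x - y) with ⟨h, _⟩ | ⟨h, _⟩ <;>
      rw [abs_of_nonneg (by linarith)] <;> linarith
  · rw [min_eq_right hx, min_eq_right hy]; simp [abs_nonneg]

lemma cl_lip (x y : ℝ) :
    |max 0 (min x 1) - max 0 (min y 1)| ≤ |x - y| := by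
  rw [max_comm 0 (min x 1), max_comm 0 (min y 1)]
  exact le_trans (abs_max_sub_max_le_abs _ _ _) (min1_lip x y)

lemma cl_mem (x : ℝ) : max 0 (min x 1) ∈ Icc (0:ℝ) 1 :=
  ⟨le_max_left _ _, max_le (by norm_num) (min_le_right _ _)⟩

lemma cl_eq {x : ℝ} (hx : x ∈ Icc (0:ℝ) 1) : max 0 (min x 1) = x := by
  rw [min_eq_left hx.2, max_eq_right hx.1]
end
section
variable {C L : ℝ → ℝ → ℝ}

lemma L_lipOn (hC : IsCopula C) (hL : HasTDF C L) :
    LipschitzOnWith 2 (fun q : ℝ × ℝ => L q.1 q.2) (Ici (0:ℝ) ×ˢ Ici (0:ℝ)) := by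
  rw [lipschitzOnWith_iff_dist_le_mul]
  intro x hx y hy
  obtain ⟨hx1, hx2⟩ := mem_prod.1 hx
  obtain ⟨hy1, hy2⟩ := mem_prod.1 hy
  rw [Real.dist_eq]
  have h := L_lip hC hL hx1 hx2 hy1 hy2
  have d1 : |x.1 - y.1| ≤ dist x y := by
    rw [Prod.dist_eq, Real.dist_eq, Real.dist_eq]; exact le_max_left _ _
  have d2 : |x.2 - y.2| ≤ dist x y := by
    rw [Prod.dist_eq, Real.dist_eq, Real.dist_eq]; exact le_max_right _ _
  push_cast
  linarith

lemma g_lip (hC : IsCopula C) (hL : HasTDF C L) :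
    LipschitzWith 2 (fun q : ℝ × ℝ => L (max 0 (min q.1 1)) (max 0 (min q.2 1))) := by
  apply LipschitzWith.of_dist_le_mul
  intro x y
  rw [Real.dist_eq]
  have h := L_lip hC hL (cl_mem x.1).1 (cl_mem x.2).1 (cl_mem y.1).1 (cl_mem y.2).1
  have c1 := cl_lip x.1 y.1
  have c2 := cl_lip x.2 y.2
  have d1 : |x.1 - y.1| ≤ dist x y := by
    rw [Prod.dist_eq, Real.dist_eq, Real.dist_eq]; exact le_max_left _ _
  have d2 : |x.2 - y.2| ≤ dist x y := by
    rw [Prod.dist_eq, Real.dist_eq, Real.dist_eq]; exact le_max_right _ _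
  push_cast
  linarith

lemma f_contOn (hC : IsCopula C) (hL : HasTDF C L) :
    ContinuousOn (fun b : ℝ => L b (1/b)) (Ioi (0:ℝ)) := by
  have h1 : ContinuousOn (fun b : ℝ => ((b, 1/b) : ℝ × ℝ)) (Ioi 0) := by
    apply ContinuousOn.prodMk continuousOn_id
    exact continuousOn_const.div continuousOn_id (fun x hx => ne_of_gt hx)
  have h2 := (L_lipOn hC hL).continuousOn
  exact h2.comp h1 (fun b hb => mem_prod.2 ⟨(show (0:ℝ) ≤ b from le_of_lt hb), (show (0:ℝ) ≤ 1 / b from le_of_lt (one_div_pos.2 (show (0:ℝ) < b from hb)))⟩)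

lemma L_mul_ratio (hC : IsCopula C) (hL : HasTDF C L) {u v K : ℝ} (hu : 0 < u) (hv : 0 < v)
    (hK : ∀ b : ℝ, 0 < b → L b (1/b) / min b (1/b) ≤ K) :
    L u v ≤ K * min u v := by
  have hsu : 0 < Real.sqrt u := Real.sqrt_pos.2 hu
  have hsv : 0 < Real.sqrt v := Real.sqrt_pos.2 hv
  set b := Real.sqrt u / Real.sqrt v with hb
  set t := Real.sqrt u * Real.sqrt v with ht
  have hb0 : 0 < b := by positivity
  have ht0 : 0 < t := by positivity
  have hub : t * b = u := by
    have h2 : Real.sqrt u * Real.sqrt u = u := Real.mul_self_sqrt hu.le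
    have e : t * b = Real.sqrt u * Real.sqrt u := by
      rw [ht, hb]; field_simp
    rw [e, h2]
  have hvb : t * (1/b) = v := by
    have h3 : Real.sqrt v * Real.sqrt v = v := Real.mul_self_sqrt hv.le
    have e : t * (1/b) = Real.sqrt v * Real.sqrt v := by
      rw [ht, hb]; field_simp
    rw [e, h3]
  have h1 : L u v = t * L b (1/b) := by
    rw [← hub, ← hvb, L_homog hL hb0.le (by positivity) ht0]
  have hmin : min u v = t * min b (1/b) := by
    rw [← hub, ← hvb, mul_comm t b, mul_comm t (1/b), ← min_mul_of_nonneg _ _ ht0.le,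
      mul_comm]
  have hm : 0 < min b (1/b) := lt_min hb0 (by positivity)
  have hkey : L b (1/b) ≤ K * min b (1/b) := by
    have h := hK b hb0
    rw [div_le_iff₀ hm] at h
    linarith [mul_comm K (min b (1/b))]
  rw [h1, hmin]
  calc t * L b (1/b) ≤ t * (K * min b (1/b)) := mul_le_mul_of_nonneg_left hkey ht0.le
    _ = K * (t * min b (1/b)) := by ring
end
section
variable {C L : ℝ → ℝ → ℝ}

lemma sq_meas : MeasurableSet (Icc (0:ℝ) 1 ×ˢ Icc (0:ℝ) 1) :=
  measurableSet_Icc.prod measurableSet_Icc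

lemma ax_meas : MeasurableSet {q : ℝ × ℝ | q.1 = 0 ∨ q.2 = 0} := by
  have : {q : ℝ × ℝ | q.1 = 0 ∨ q.2 = 0} =
      (Prod.fst ⁻¹' {(0:ℝ)}) ∪ (Prod.snd ⁻¹' {(0:ℝ)}) := by
    ext q
    simp only [Set.mem_setOf_eq, Set.mem_union, Set.mem_preimage, Set.mem_singleton_iff]
  rw [this]
  exact (measurable_fst (measurableSet_singleton 0)).union
    (measurable_snd (measurableSet_singleton 0))

lemma dirac_tgm {q0 : ℝ × ℝ} (hq1 : q0.1 ∈ Icc (0:ℝ) 1) (hq2 : q0.2 ∈ Icc (0:ℝ) 1)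
    (h1 : q0.1 ≠ 0) (h2 : q0.2 ≠ 0) : IsTailGenMeasure (Measure.dirac q0) := by
  refine ⟨by infer_instance, ?_, ?_⟩
  · rw [Measure.dirac_apply' _ sq_meas.compl]
    apply Set.indicator_of_notMem
    simp only [mem_compl_iff, not_not]
    exact mem_prod.2 ⟨hq1, hq2⟩
  · rw [Measure.dirac_apply' _ ax_meas]
    have hnm : q0 ∉ {q : ℝ × ℝ | q.1 = 0 ∨ q.2 = 0} := by
      simp only [Set.mem_setOf_eq]
      push_neg
      exact ⟨h1, h2⟩
    rw [Set.indicator_of_notMem hnm]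
    norm_num

lemma tdm_dirac (L : ℝ → ℝ → ℝ) (q0 : ℝ × ℝ) :
    tdm L (Measure.dirac q0) = L q0.1 q0.2 / min q0.1 q0.2 := by
  unfold tdm
  rw [integral_dirac (fun q : ℝ × ℝ => L q.1 q.2) q0,
    integral_dirac (fun q : ℝ × ℝ => min q.1 q.2) q0]

lemma tdm_le (hC : IsCopula C) (hL : HasTDF C L) {K : ℝ} (hK0 : 0 ≤ K)
    (hK : ∀ b : ℝ, 0 < b → L b (1/b) / min b (1/b) ≤ K)
    {μ : Measure (ℝ × ℝ)} (hμ : IsTailGenMeasure μ) : tdm L μ ≤ K := by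
  obtain ⟨hprob, hsq, hax⟩ := hμ
  set g : ℝ × ℝ → ℝ := fun q => L (max 0 (min q.1 1)) (max 0 (min q.2 1)) with hg
  have hgc : Continuous g := (g_lip hC hL).continuous
  have haesq : ∀ᵐ q ∂μ, q ∈ Icc (0:ℝ) 1 ×ˢ Icc (0:ℝ) 1 := by
    rw [ae_iff]
    convert hsq using 2
    rfl
  have haeeq : (fun q : ℝ × ℝ => L q.1 q.2) =ᵐ[μ] g := by
    filter_upwards [haesq] with q hq
    obtain ⟨hq1, hq2⟩ := mem_prod.1 hq
    simp only [hg, cl_eq hq1, cl_eq hq2]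
  have hgint : Integrable g μ := by
    apply Integrable.mono' (integrable_const (1:ℝ)) hgc.aestronglyMeasurable
    filter_upwards with q
    rw [Real.norm_eq_abs, abs_le]
    have h0 := L_nonneg hC hL (cl_mem q.1).1 (cl_mem q.2).1
    have h1 := L_le_min hC hL (cl_mem q.1).1 (cl_mem q.2).1
    have h2 := (cl_mem q.1).2
    constructor
    · linarith
    · exact le_trans h1 (le_trans (min_le_left _ _) h2)
  have hLint : Integrable (fun q : ℝ × ℝ => L q.1 q.2) μ := hgint.congr haeeq.symm
  have hmc : Continuous fun q : ℝ × ℝ => min q.1 q.2 :=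
    continuous_fst.min continuous_snd
  have hmint : Integrable (fun q : ℝ × ℝ => min q.1 q.2) μ := by
    apply Integrable.mono' (integrable_const (1:ℝ)) hmc.aestronglyMeasurable
    filter_upwards [haesq] with q hq
    obtain ⟨hq1, hq2⟩ := mem_prod.1 hq
    rw [Real.norm_eq_abs, abs_le]
    constructor
    · have := le_min hq1.1 hq2.1; linarith
    · exact le_trans (min_le_left _ _) hq1.2
  have hmin_nonneg : 0 ≤ᵐ[μ] fun q : ℝ × ℝ => min q.1 q.2 := by
    filter_upwards [haesq] with q hq
    obtain ⟨hq1, hq2⟩ := mem_prod.1 hq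
    exact le_min hq1.1 hq2.1
  have hpos : 0 < ∫ q : ℝ × ℝ, min q.1 q.2 ∂μ := by
    rw [integral_pos_iff_support_of_nonneg_ae hmin_nonneg hmint]
    by_contra hcon
    push_neg at hcon
    have h0 : μ (Function.support fun q : ℝ × ℝ => min q.1 q.2) = 0 :=
      le_antisymm hcon zero_le
    have hsub : (univ : Set (ℝ × ℝ)) ⊆
        (Function.support fun q : ℝ × ℝ => min q.1 q.2) ∪
        ((Icc (0:ℝ) 1 ×ˢ Icc (0:ℝ) 1)ᶜ ∪ {q : ℝ × ℝ | q.1 = 0 ∨ q.2 = 0}) := by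
      intro q _
      by_cases hq : q ∈ Icc (0:ℝ) 1 ×ˢ Icc (0:ℝ) 1
      · obtain ⟨hq1, hq2⟩ := mem_prod.1 hq
        by_cases hz : q.1 = 0 ∨ q.2 = 0
        · exact Or.inr (Or.inr hz)
        · push_neg at hz
          left
          have : 0 < min q.1 q.2 :=
            lt_min (lt_of_le_of_ne hq1.1 (Ne.symm hz.1)) (lt_of_le_of_ne hq2.1 (Ne.symm hz.2))
          exact ne_of_gt this
      · exact Or.inr (Or.inl hq)
    have hcalc : (1:ENNReal) ≤ μ {q : ℝ × ℝ | q.1 = 0 ∨ q.2 = 0} := by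
      calc (1:ENNReal) = μ univ := (measure_univ).symm
        _ ≤ μ ((Function.support fun q : ℝ × ℝ => min q.1 q.2) ∪
            ((Icc (0:ℝ) 1 ×ˢ Icc (0:ℝ) 1)ᶜ ∪ {q : ℝ × ℝ | q.1 = 0 ∨ q.2 = 0})) :=
          measure_mono hsub
        _ ≤ μ (Function.support fun q : ℝ × ℝ => min q.1 q.2) +
            (μ ((Icc (0:ℝ) 1 ×ˢ Icc (0:ℝ) 1)ᶜ) + μ {q : ℝ × ℝ | q.1 = 0 ∨ q.2 = 0}) :=
          le_trans (measure_union_le _ _) (by gcongr; exact measure_union_le _ _)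
        _ = μ {q : ℝ × ℝ | q.1 = 0 ∨ q.2 = 0} := by rw [h0, hsq]; simp
    exact absurd (lt_of_le_of_lt hcalc hax) (lt_irrefl _)
  have hle : (fun q : ℝ × ℝ => L q.1 q.2) ≤ᵐ[μ] fun q => K * min q.1 q.2 := by
    filter_upwards [haesq] with q hq
    obtain ⟨hq1, hq2⟩ := mem_prod.1 hq
    rcases eq_or_lt_of_le hq1.1 with h | h
    · have hm : min q.1 q.2 = 0 := by rw [← h]; exact min_eq_left hq2.1
      have := L_le_min hC hL hq1.1 hq2.1
      rw [hm] at this ⊢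
      simpa using this
    rcases eq_or_lt_of_le hq2.1 with h2 | h2
    · have hm : min q.1 q.2 = 0 := by rw [← h2]; exact min_eq_right hq1.1
      have := L_le_min hC hL hq1.1 hq2.1
      rw [hm] at this ⊢
      simpa using this
    · exact L_mul_ratio hC hL h h2 hK
  have hmono : (∫ q, L q.1 q.2 ∂μ) ≤ ∫ q : ℝ × ℝ, K * min q.1 q.2 ∂μ :=
    integral_mono_ae hLint (hmint.const_mul K) hle
  rw [integral_const_mul] at hmono
  unfold tdm
  rw [div_le_iff₀ hpos]
  linarith
end

theorem maximal_tail_dependence_inequalities (C Λ : ℝ → ℝ → ℝ)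
    (hC : IsCopula C) (hΛ : HasTDF C Λ) :
    let chiBar : ℝ := sSup {x : ℝ | ∃ b : ℝ, 0 < b ∧ x = Λ b (1 / b)}
    let A : Set ℝ := {a : ℝ | 0 < a ∧ ∀ b : ℝ, 0 < b → Λ b (1 / b) ≤ Λ a (1 / a)}
    let mBar : ℝ := sSup {x : ℝ | ∃ a ∈ A, x = min a (1 / a)}
    let kappaBar : ℝ := sSup {x : ℝ | ∃ b : ℝ, 0 < b ∧ x = Λ b (1 / b) / min b (1 / b)}
    let lamBar : ℝ := sSup {x : ℝ | ∃ μ : Measure (ℝ × ℝ), IsTailGenMeasure μ ∧ x = tdm Λ μ}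
    (∃ a, a ∈ A) ∧ 0 < mBar ∧
    Λ 1 1 ≤ chiBar ∧ chiBar ≤ chiBar / mBar ∧ chiBar / mBar ≤ kappaBar ∧
    kappaBar = lamBar := by

  intro chiBar A mBar kappaBar lamBar
  set f : ℝ → ℝ := fun b => Λ b (1 / b) with hf
  -- basic facts about f
  have hf_le : ∀ b : ℝ, 0 < b → f b ≤ min b (1 / b) := fun b hb =>
    L_le_min hC hΛ hb.le (by positivity)
  have hf_nn : ∀ b : ℝ, 0 < b → 0 ≤ f b := fun b hb =>
    L_nonneg hC hΛ hb.le (by positivity)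
  have hmin_le_one : ∀ b : ℝ, 0 < b → min b (1 / b) ≤ 1 := by
    intro b hb
    rcases le_total b 1 with h | h
    · exact le_trans (min_le_left _ _) h
    · refine le_trans (min_le_right _ _) ?_
      rw [div_le_one hb]; linarith
  have hf_le_one : ∀ b : ℝ, 0 < b → f b ≤ 1 := fun b hb =>
    le_trans (hf_le b hb) (hmin_le_one b hb)
  -- the set S
  have hS_ne : {x : ℝ | ∃ b : ℝ, 0 < b ∧ x = Λ b (1 / b)}.Nonempty :=
    ⟨Λ 1 (1 / 1), 1, one_pos, rfl⟩
  have hS_bdd : BddAbove {x : ℝ | ∃ b : ℝ, 0 < b ∧ x = Λ b (1 / b)} := by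
    refine ⟨1, fun x hx => ?_⟩
    obtain ⟨b, hb, rfl⟩ := hx
    exact hf_le_one b hb
  have hf_le_chi : ∀ b : ℝ, 0 < b → f b ≤ chiBar := fun b hb =>
    le_csSup hS_bdd ⟨b, hb, rfl⟩
  have chi_ge : Λ 1 1 ≤ chiBar := by
    have h := hf_le_chi 1 one_pos
    simp only [hf] at h
    norm_num at h
    exact h
  have chi_nonneg : 0 ≤ chiBar := le_trans (L_nonneg hC hΛ zero_le_one zero_le_one) chi_ge
  have chi_le_one : chiBar ≤ 1 := csSup_le hS_ne (by rintro x ⟨b, hb, rfl⟩; exact hf_le_one b hb)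
  -- existence of a maximizer
  have hA : ∃ a, a ∈ A := by
    by_cases hM : chiBar ≤ 0
    · exact ⟨1, one_pos, fun b hb => le_trans (le_trans (hf_le_chi b hb) hM) (hf_nn 1 one_pos)⟩
    · push_neg at hM
      set ε : ℝ := chiBar / 2 with hε
      have hε0 : 0 < ε := by positivity
      have hε1 : ε ≤ 1 / 2 := by rw [hε]; linarith
      have hεinv : ε ≤ ε⁻¹ := by
        have h1 : ε ≤ 1 := by linarith
        nlinarith [mul_inv_cancel₀ (ne_of_gt hε0), inv_pos.2 hε0,
          mul_nonneg (sub_nonneg.2 h1) (inv_pos.2 hε0).le]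
      have hKsub : Icc ε ε⁻¹ ⊆ Ioi (0:ℝ) := fun x hx => lt_of_lt_of_le hε0 hx.1
      obtain ⟨a, haK, hamax⟩ := isCompact_Icc.exists_isMaxOn ⟨ε, le_refl ε, hεinv⟩
        ((f_contOn hC hΛ).mono hKsub)
      have hout : ∀ b : ℝ, 0 < b → b ∉ Icc ε ε⁻¹ → f b < ε := by
        intro b hb hbK
        rw [mem_Icc, not_and_or, not_le, not_le] at hbK
        rcases hbK with h | h
        · exact lt_of_le_of_lt (le_trans (hf_le b hb) (min_le_left _ _)) h
        · refine lt_of_le_of_lt (le_trans (hf_le b hb) (min_le_right _ _)) ?_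
          rw [div_lt_iff₀ hb]
          have : ε * ε⁻¹ = 1 := mul_inv_cancel₀ (ne_of_gt hε0)
          nlinarith
      have hex : ∃ x ∈ {x : ℝ | ∃ b : ℝ, 0 < b ∧ x = Λ b (1 / b)}, ε < x := by
        by_contra hcon
        push_neg at hcon
        have : chiBar ≤ ε := csSup_le hS_ne hcon
        rw [hε] at this; linarith
      obtain ⟨x, hxS, hxgt⟩ := hex
      obtain ⟨b0, hb0, rfl⟩ := hxS
      have hb0K : b0 ∈ Icc ε ε⁻¹ := by
        by_contra hcon
        exact absurd hxgt (not_lt.2 (hout b0 hb0 hcon).le)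
      have hfa : ε < f a := lt_of_lt_of_le hxgt (hamax hb0K)
      refine ⟨a, lt_of_lt_of_le hε0 haK.1, fun b hb => ?_⟩
      by_cases hbK : b ∈ Icc ε ε⁻¹
      · exact hamax hbK
      · exact le_trans (hout b hb hbK).le hfa.le
  obtain ⟨a0, ha0⟩ := hA
  have ha0pos : 0 < a0 := ha0.1
  have hm0pos : 0 < min a0 (1 / a0) := lt_min ha0pos (by positivity)
  -- chiBar = f a0
  have chi_eq : chiBar = f a0 :=
    le_antisymm (csSup_le hS_ne (by rintro x ⟨b, hb, rfl⟩; exact ha0.2 b hb))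
      (hf_le_chi a0 ha0pos)
  -- mBar facts
  have hSm_ne : {x : ℝ | ∃ a ∈ A, x = min a (1 / a)}.Nonempty := ⟨min a0 (1 / a0), a0, ha0, rfl⟩
  have hSm_bdd : BddAbove {x : ℝ | ∃ a ∈ A, x = min a (1 / a)} := by
    refine ⟨1, ?_⟩
    rintro x ⟨a, ha, rfl⟩
    exact hmin_le_one a ha.1
  have hm_pos : 0 < mBar := lt_of_lt_of_le hm0pos (le_csSup hSm_bdd ⟨a0, ha0, rfl⟩)
  have hm_le_one : mBar ≤ 1 := csSup_le hSm_ne (by rintro x ⟨a, ha, rfl⟩; exact hmin_le_one a ha.1)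
  -- kappaBar facts
  have hSk_ne : {x : ℝ | ∃ b : ℝ, 0 < b ∧ x = Λ b (1 / b) / min b (1 / b)}.Nonempty :=
    ⟨Λ 1 (1 / 1) / min 1 (1 / 1), 1, one_pos, rfl⟩
  have hSk_bdd : BddAbove {x : ℝ | ∃ b : ℝ, 0 < b ∧ x = Λ b (1 / b) / min b (1 / b)} := by
    refine ⟨1, ?_⟩
    rintro x ⟨b, hb, rfl⟩
    rw [div_le_one (lt_min hb (by positivity))]
    exact hf_le b hb
  have hratio_le : ∀ b : ℝ, 0 < b → Λ b (1 / b) / min b (1 / b) ≤ kappaBar := fun b hb =>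
    le_csSup hSk_bdd ⟨b, hb, rfl⟩
  have kappa_nonneg : 0 ≤ kappaBar := by
    have h1 := hratio_le 1 one_pos
    have h2 : Λ 1 (1 / 1) / min 1 (1 / 1) = Λ 1 1 := by norm_num
    rw [h2] at h1
    exact le_trans (L_nonneg hC hΛ zero_le_one zero_le_one) h1
  -- chain of inequalities
  have ineq2 : chiBar ≤ chiBar / mBar := by
    rw [le_div_iff₀ hm_pos]
    exact mul_le_of_le_one_right chi_nonneg hm_le_one
  have ineq3 : chiBar / mBar ≤ kappaBar := by
    rw [div_le_iff₀ hm_pos]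
    have h1 : f a0 ≤ kappaBar * min a0 (1 / a0) := by
      have := hratio_le a0 ha0pos
      rw [div_le_iff₀ hm0pos] at this
      exact this
    have h2 : min a0 (1 / a0) ≤ mBar := le_csSup hSm_bdd ⟨a0, ha0, rfl⟩
    calc chiBar = f a0 := chi_eq
      _ ≤ kappaBar * min a0 (1 / a0) := h1
      _ ≤ kappaBar * mBar := mul_le_mul_of_nonneg_left h2 kappa_nonneg
  -- kappaBar = lamBar
  have hsub : {x : ℝ | ∃ b : ℝ, 0 < b ∧ x = Λ b (1 / b) / min b (1 / b)} ⊆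
      {x : ℝ | ∃ μ : Measure (ℝ × ℝ), IsTailGenMeasure μ ∧ x = tdm Λ μ} := by
    rintro x ⟨b, hb, rfl⟩
    set s : ℝ := min b (1 / b) with hs
    have hs0 : 0 < s := lt_min hb (by positivity)
    have hsb1 : s * b ≤ 1 := by
      have h1 : s ≤ 1 / b := min_le_right _ _
      calc s * b ≤ (1 / b) * b := mul_le_mul_of_nonneg_right h1 hb.le
        _ = 1 := by field_simp
    have hsinv1 : s * (1 / b) ≤ 1 := by
      have h1 : s ≤ b := min_le_left _ _
      calc s * (1 / b) ≤ b * (1 / b) := mul_le_mul_of_nonneg_right h1 (by positivity)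
        _ = 1 := by field_simp
    have hsb0 : 0 < s * b := by positivity
    have hsinv0 : 0 < s * (1 / b) := by positivity
    refine ⟨Measure.dirac (s * b, s * (1 / b)),
      dirac_tgm ⟨hsb0.le, hsb1⟩ ⟨hsinv0.le, hsinv1⟩ (ne_of_gt hsb0) (ne_of_gt hsinv0), ?_⟩
    rw [tdm_dirac]
    simp only
    rw [L_homog hΛ hb.le (by positivity) hs0]
    have hmineq : min (s * b) (s * (1 / b)) = s * min b (1 / b) := by
      rw [mul_comm s b, mul_comm s (1 / b), ← min_mul_of_nonneg _ _ hs0.le, mul_comm]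
    rw [hmineq, mul_div_mul_left _ _ (ne_of_gt hs0)]
  have hub_SL : ∀ x ∈ {x : ℝ | ∃ μ : Measure (ℝ × ℝ), IsTailGenMeasure μ ∧ x = tdm Λ μ},
      x ≤ kappaBar := by
    rintro x ⟨μ, hμ, rfl⟩
    exact tdm_le hC hΛ kappa_nonneg hratio_le hμ
  have hSL_bdd : BddAbove {x : ℝ | ∃ μ : Measure (ℝ × ℝ), IsTailGenMeasure μ ∧ x = tdm Λ μ} :=
    ⟨kappaBar, hub_SL⟩
  have heq : kappaBar = lamBar :=
    le_antisymm (csSup_le_csSup hSL_bdd hSk_ne hsub)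
      (csSup_le (hSk_ne.mono hsub) hub_SL)
  exact ⟨⟨a0, ha0⟩, hm_pos, chi_ge, ineq2, ineq3, heq⟩
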